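/- arXiv:2511.22073 — 2 statements merged into one kernel-verified Lean document; each statement's English description precedes it below -/
import Mathlib

section
/- Let R be a finite rack and n = min { k ∈ Z_{>0} : S_y^k(x) = x for all x, y ∈ R }, where S_y(x) = x ◁ y. Then the set R × Z/nZ, viewed as the disjoint union over x ∈ R of the groups {x} × Z/nZ (each isomorphic to Z/nZ with (x,i)(x,j) = (x, i+j)), equipped with the operation (x, i) ◁ (y, j) = (S_y^j(x), i), is a multiple group rack: it satisfies (i) (x,i) ◁ ((y,j)(y,k)) = ((x,i) ◁ (y,j)) ◁ (y,k) and (x,i) ◁ (y,0) = (x,i); (ii) right self-distributivity; and (iii) for any (y,j), the map a ↦ a ◁ (y,j) sends each group {x} × Z/nZ to the group {S_y^j(x)} × Z/nZ and is a group homomorphism there. -/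
lemma mgr_iterate_mod {R : Type*} (f : R → R) (n : ℕ) (hn : 0 < n)
    (hf : ∀ x, f^[n] x = x) : ∀ m x, f^[m] x = f^[m % n] x := by
  intro m
  induction m using Nat.strong_induction_on with
  | _ m ih =>
    intro x
    by_cases h : m < n
    · rw [Nat.mod_eq_of_lt h]
    · push_neg at h
      have h1 : m = (m - n) + n := by omega
      rw [h1, Function.iterate_add_apply, hf, ih (m - n) (by omega) x,
        Nat.add_mod_right]

/-- For a finite rack `R` with `n` the least positive integer such that
`S_y^n = id` for all `y`, the set `R × ZMod n` with operation
`(x, i) ◁ (y, j) = (S_y^j x, i)` and groups `{x} × ZMod n` is a multiple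
group rack. -/
theorem finite_rack_gives_mgr {R : Type*} [Fintype R]
    (op : R → R → R)
    (hbij : ∀ y, Function.Bijective (fun x => op x y))
    (hdist : ∀ x y z, op (op x y) z = op (op x z) (op y z))
    (n : ℕ)
    (hn : IsLeast {k : ℕ | 0 < k ∧ ∀ x y : R, (fun a => op a y)^[k] x = x} n)
    (tri : R × ZMod n → R × ZMod n → R × ZMod n)
    (htri : ∀ (x y : R) (i j : ZMod n),
      tri (x, i) (y, j) = ((fun a => op a y)^[j.val] x, i)) :
    -- (i) right group-action property
    (∀ (x y : R) (i j k : ZMod n),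
      tri (x, i) (y, j + k) = tri (tri (x, i) (y, j)) (y, k)) ∧
    (∀ (x y : R) (i : ZMod n), tri (x, i) (y, (0 : ZMod n)) = (x, i)) ∧
    -- (ii) right self-distributivity
    (∀ p q r : R × ZMod n, tri (tri p q) r = tri (tri p r) (tri q r)) ∧
    -- (iii) right translation maps the group {x} × ZMod n onto the group
    -- {S_y^j x} × ZMod n and is a group homomorphism there
    (∀ (x y : R) (i j : ZMod n),
      (tri (x, i) (y, j)).1 = (fun a => op a y)^[j.val] x) ∧
    (∀ (x y : R) (i k j : ZMod n),
      tri (x, i + k) (y, j) = ((tri (x, i) (y, j)).1, i + k)) := by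
  obtain ⟨⟨hnpos, hper⟩, _⟩ := hn
  haveI : NeZero n := ⟨hnpos.ne'⟩
  have hmod : ∀ (y : R) (m : ℕ) (x : R),
      (fun a => op a y)^[m] x = (fun a => op a y)^[m % n] x := by
    intro y
    exact mgr_iterate_mod _ n hnpos (fun x => hper x y)
  -- key distributivity for iterates
  have key1 : ∀ (j : ℕ) (x y z : R),
      op ((fun a => op a y)^[j] x) z
        = (fun a => op a (op y z))^[j] (op x z) := by
    intro j
    induction j with
    | zero => simp
    | succ j ih =>
      intro x y z
      rw [Function.iterate_succ_apply', Function.iterate_succ_apply']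
      rw [hdist, ih]
  have key2 : ∀ (k j : ℕ) (x y z : R),
      (fun a => op a z)^[k] ((fun a => op a y)^[j] x)
        = (fun a => op a ((fun a => op a z)^[k] y))^[j]
            ((fun a => op a z)^[k] x) := by
    intro k
    induction k with
    | zero => simp
    | succ k ih =>
      intro j x y z
      rw [Function.iterate_succ_apply', Function.iterate_succ_apply',
        Function.iterate_succ_apply']
      rw [ih, key1]
  refine ⟨?_, ?_, ?_, ?_, ?_⟩
  · intro x y i j k
    rw [htri, htri, htri]
    refine Prod.ext ?_ rfl
    simp only
    rw [ZMod.val_add, ← hmod, add_comm, Function.iterate_add_apply]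
  · intro x y i
    rw [htri]
    simp
  · rintro ⟨x, i⟩ ⟨y, j⟩ ⟨z, k⟩
    rw [htri, htri, htri, htri, htri]
    refine Prod.ext ?_ rfl
    simp only
    exact key2 k.val j.val x y z
  · intro x y i j
    rw [htri]
  · intro x y i k j
    rw [htri, htri]
end

section
/- For m, n ∈ Z, define the 4 × 4 integer matrices V_m and V_n with rows (0,0,0,0), (0,0,1,0), (−1,0,4,0), (−1,0,0,4+2m) and correspondingly for n. If |4 + 2m| ≠ |4 + 2n|, then V_m and V_n are not unimodularly congruent. -/
private def Vmat (k : ℤ) : Matrix (Fin 4) (Fin 4) ℤ :=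
  !![0, 0, 0, 0; 0, 0, 1, 0; -1, 0, 4, 0; -1, 0, 0, 4 + 2 * k]

private lemma Vadj (k : ℤ) :
    (Vmat k).adjugate = Matrix.single 1 0 (-(4 + 2 * k)) := by
  ext i j
  fin_cases i <;> fin_cases j <;>
    simp [Vmat, Matrix.adjugate_fin_succ_eq_det_submatrix, Matrix.det_fin_three,
      Fin.succAbove, Matrix.single, Matrix.vecHead, Matrix.vecTail]

private lemma dvd_of_congr (m n : ℤ) (P : Matrix (Fin 4) (Fin 4) ℤ)
    (hB : Vmat n = P.transpose * Vmat m * P) : (4 + 2 * m) ∣ (4 + 2 * n) := by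
  have hadj : (Vmat n).adjugate
      = P.adjugate * ((Vmat m).adjugate * P.transpose.adjugate) := by
    rw [hB, Matrix.adjugate_mul_distrib, Matrix.adjugate_mul_distrib]
  rw [Vadj, Vadj] at hadj
  have h10 := congrArg (fun M : Matrix (Fin 4) (Fin 4) ℤ => M 1 0) hadj
  simp [Matrix.mul_apply, Matrix.single, Fin.sum_univ_four] at h10
  exact ⟨P.adjugate 1 1 * P.transpose.adjugate 0 0, by linear_combination -h10⟩

/-- If `|4 + 2m| ≠ |4 + 2n|`, the Seifert matrices `V_m` and `V_n` are not
unimodularly congruent. -/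
theorem Vm_Vn_not_unimodularly_congruent (m n : ℤ)
    (h : |4 + 2 * m| ≠ |4 + 2 * n|) :
    ¬ ∃ P : Matrix (Fin 4) (Fin 4) ℤ,
      (P.det = 1 ∨ P.det = -1) ∧
      (!![0, 0, 0, 0; 0, 0, 1, 0; -1, 0, 4, 0; -1, 0, 0, 4 + 2 * n] :
          Matrix (Fin 4) (Fin 4) ℤ) =
        P.transpose *
          (!![0, 0, 0, 0; 0, 0, 1, 0; -1, 0, 4, 0; -1, 0, 0, 4 + 2 * m] :
            Matrix (Fin 4) (Fin 4) ℤ) * P := by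
  rintro ⟨P, hdet, hB⟩
  have h1 : (4 + 2 * m) ∣ (4 + 2 * n) := dvd_of_congr m n P hB
  have hu : IsUnit P.det := by rcases hdet with h' | h' <;> simp [h']
  have hut : IsUnit P.transpose.det := by rwa [Matrix.det_transpose]
  have hA : Vmat m = (P⁻¹).transpose * Vmat n * (P⁻¹) := by
    haveI := P.invertibleOfIsUnitDet hu
    haveI := P.transpose.invertibleOfIsUnitDet hut
    have hBv : Vmat n = P.transpose * Vmat m * P := hB
    rw [hBv, Matrix.transpose_nonsing_inv]
    rw [Matrix.mul_assoc P.transpose (Vmat m) P,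
      Matrix.inv_mul_cancel_left_of_invertible,
      Matrix.mul_inv_cancel_right_of_invertible]
  have h2 : (4 + 2 * n) ∣ (4 + 2 * m) := dvd_of_congr n m (P⁻¹) hA
  exact h (Int.dvd_antisymm (abs_nonneg _) (abs_nonneg _)
    ((abs_dvd _ _).2 ((dvd_abs _ _).2 h1)) ((abs_dvd _ _).2 ((dvd_abs _ _).2 h2)))
end
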